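/- Let G be a simple graph on n vertices. If G is both L-exact and Q-exact, then G is regular (and consequently also A-exact). -/

import Mathlib

open Finset Matrix BigOperators

set_option linter.unusedSectionVars false

variable {V : Type*} [Fintype V] [DecidableEq V]

/-- Number of edges of `G` with exactly one endpoint in `S` (each unordered edge counted once,
as the ordered pair going out of `S`). -/
def cutNum (G : SimpleGraph V) [DecidableRel G.Adj] (S : Finset V) : ℕ :=
  (Finset.univ.filter (fun p : V × V => G.Adj p.1 p.2 ∧ p.1 ∈ S ∧ p.2 ∉ S)).card

/-- Number of edges of `G` with both endpoints in `S` or both outside `S`. -/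
def cohNum (G : SimpleGraph V) [DecidableRel G.Adj] (S : Finset V) : ℕ :=
  G.edgeFinset.card - cutNum G S

/-- The maximum cut of `G`. -/
def mcut (G : SimpleGraph V) [DecidableRel G.Adj] : ℕ :=
  Finset.univ.sup (fun S : Finset V => cutNum G S)

/-- The ±1 partition vector of a vertex subset `S`. -/
def pvec (S : Finset V) : V → ℝ := fun v => if v ∈ S then 1 else -1

/-- The signless Laplacian matrix `Q = D + A` of a graph. -/
def signlessLap (G : SimpleGraph V) [DecidableRel G.Adj] : Matrix V V ℝ :=
  G.degMatrix ℝ + G.adjMatrix ℝ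

lemma isHermitian_adj (G : SimpleGraph V) [DecidableRel G.Adj] :
    (G.adjMatrix ℝ).IsHermitian := by
  rw [IsHermitian, conjTranspose_eq_transpose_of_trivial]
  exact SimpleGraph.isSymm_adjMatrix G

lemma isHermitian_lap (G : SimpleGraph V) [DecidableRel G.Adj] :
    (G.lapMatrix ℝ).IsHermitian := by
  rw [IsHermitian, conjTranspose_eq_transpose_of_trivial]
  exact G.isSymm_lapMatrix ℝ

lemma isHermitian_signlessLap (G : SimpleGraph V) [DecidableRel G.Adj] :
    (signlessLap G).IsHermitian := by
  rw [IsHermitian, conjTranspose_eq_transpose_of_trivial]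
  exact (G.isSymm_degMatrix ℝ).add (SimpleGraph.isSymm_adjMatrix G)

/-- The spanning subgraph of `G` consisting of the edges between `S` and its complement. -/
def crossGraph (G : SimpleGraph V) (S : Finset V) : SimpleGraph V where
  Adj u v := G.Adj u v ∧ ((u ∈ S) ↔ (v ∉ S))
  symm := ⟨fun u v h => ⟨h.1.symm, by tauto⟩⟩
  loopless := ⟨fun v h => G.loopless.irrefl v h.1⟩

/-- The spanning subgraph of `G` consisting of the edges inside `S` or inside its complement. -/
def insideGraph (G : SimpleGraph V) (S : Finset V) : SimpleGraph V where
  Adj u v := G.Adj u v ∧ ((u ∈ S) ↔ (v ∈ S))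
  symm := ⟨fun u v h => ⟨h.1.symm, h.2.symm⟩⟩
  loopless := ⟨fun v h => G.loopless.irrefl v h.1⟩

instance (G : SimpleGraph V) [DecidableRel G.Adj] (S : Finset V) :
    DecidableRel (crossGraph G S).Adj := fun _ _ => inferInstanceAs (Decidable (_ ∧ _))

instance (G : SimpleGraph V) [DecidableRel G.Adj] (S : Finset V) :
    DecidableRel (insideGraph G S).Adj := fun _ _ => inferInstanceAs (Decidable (_ ∧ _))

/-- The second largest value (with multiplicity) of a finitely indexed family of reals. -/
noncomputable def secondLargest (f : V → ℝ) : ℝ :=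
  (Multiset.sort (Finset.univ.val.map f) (· ≤ ·)).getD (Fintype.card V - 2) 0

/-- The join of two graphs: disjoint union plus all edges in between. -/
def joinGraph {α β : Type*} (H₁ : SimpleGraph α) (H₂ : SimpleGraph β) :
    SimpleGraph (α ⊕ β) where
  Adj x y :=
    match x, y with
    | Sum.inl u, Sum.inl v => H₁.Adj u v
    | Sum.inr u, Sum.inr v => H₂.Adj u v
    | Sum.inl _, Sum.inr _ => True
    | Sum.inr _, Sum.inl _ => True
  symm := by constructor; rintro (u | u) (v | v) h <;> first | exact h.symm | trivial
  loopless := by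
    constructor
    rintro (u | u) h
    · exact H₁.loopless.irrefl u h
    · exact H₂.loopless.irrefl u h

instance {α β : Type*} (H₁ : SimpleGraph α) (H₂ : SimpleGraph β)
    [DecidableRel H₁.Adj] [DecidableRel H₂.Adj] :
    DecidableRel (joinGraph H₁ H₂).Adj := fun x y =>
  match x, y with
  | Sum.inl u, Sum.inl v => inferInstanceAs (Decidable (H₁.Adj u v))
  | Sum.inr u, Sum.inr v => inferInstanceAs (Decidable (H₂.Adj u v))
  | Sum.inl _, Sum.inr _ => inferInstanceAs (Decidable True)
  | Sum.inr _, Sum.inl _ => inferInstanceAs (Decidable True)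

set_option maxHeartbeats 1000000

section Aux

lemma smul_one_decomp {M : Matrix V V ℝ} (hM : M.IsHermitian) (c : ℝ) :
    c • (1 : Matrix V V ℝ)
    = (hM.eigenvectorUnitary : Matrix V V ℝ) * Matrix.diagonal (fun _ => c) *
      star (hM.eigenvectorUnitary : Matrix V V ℝ) := by
  have hU : (hM.eigenvectorUnitary : Matrix V V ℝ) *
      star (hM.eigenvectorUnitary : Matrix V V ℝ) = 1 :=
    Matrix.mem_unitaryGroup_iff.mp (hM.eigenvectorUnitary).2
  have h1 : Matrix.diagonal (fun _ : V => c) = c • (1 : Matrix V V ℝ) := by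
    ext i j; by_cases h : i = j <;> simp [h, Matrix.one_apply]
  rw [h1, Matrix.mul_smul, Matrix.mul_one, Matrix.smul_mul, hU]

lemma psd_smul_sub {M : Matrix V V ℝ} (hM : M.IsHermitian) {c : ℝ}
    (h : ∀ i, hM.eigenvalues i ≤ c) : (c • (1 : Matrix V V ℝ) - M).PosSemidef := by
  have key : c • (1 : Matrix V V ℝ) - M
      = (hM.eigenvectorUnitary : Matrix V V ℝ) *
          Matrix.diagonal (fun i => c - hM.eigenvalues i) *
          star (hM.eigenvectorUnitary : Matrix V V ℝ) := by
    conv_lhs => rw [hM.spectral_theorem, smul_one_decomp hM c]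
    rw [Unitary.conjStarAlgAut_apply, ← Matrix.sub_mul, ← Matrix.mul_sub, ← Matrix.diagonal_sub]
    rfl
  rw [key, Matrix.star_eq_conjTranspose]
  exact (Matrix.posSemidef_diagonal_iff.mpr fun i => by
    linarith [h i]).mul_mul_conjTranspose_same _

lemma psd_sub_smul {M : Matrix V V ℝ} (hM : M.IsHermitian) {c : ℝ}
    (h : ∀ i, c ≤ hM.eigenvalues i) : (M - c • (1 : Matrix V V ℝ)).PosSemidef := by
  have key : M - c • (1 : Matrix V V ℝ)
      = (hM.eigenvectorUnitary : Matrix V V ℝ) *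
          Matrix.diagonal (fun i => hM.eigenvalues i - c) *
          star (hM.eigenvectorUnitary : Matrix V V ℝ) := by
    conv_lhs => rw [hM.spectral_theorem, smul_one_decomp hM c]
    rw [Unitary.conjStarAlgAut_apply, ← Matrix.sub_mul, ← Matrix.mul_sub, ← Matrix.diagonal_sub]
    rfl
  rw [key, Matrix.star_eq_conjTranspose]
  exact (Matrix.posSemidef_diagonal_iff.mpr fun i => by
    linarith [h i]).mul_mul_conjTranspose_same _

lemma sum_adj_ind (G : SimpleGraph V) [DecidableRel G.Adj] :
    ∑ i : V, ∑ j : V, (if G.Adj i j then (1:ℝ) else 0) = 2 * G.edgeFinset.card := by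
  have h1 : ∀ i : V, ∑ j : V, (if G.Adj i j then (1:ℝ) else 0) = G.degree i := by
    intro i
    rw [Finset.sum_boole, SimpleGraph.degree, SimpleGraph.neighborFinset_eq_filter]
  simp_rw [h1]
  rw [← Nat.cast_sum, SimpleGraph.sum_degrees_eq_twice_card_edges]
  push_cast; ring

lemma cutNum_real (G : SimpleGraph V) [DecidableRel G.Adj] (S : Finset V) :
    (cutNum G S : ℝ) = ∑ i : V, ∑ j : V,
      (if G.Adj i j ∧ i ∈ S ∧ j ∉ S then (1:ℝ) else 0) := by
  rw [cutNum, Finset.card_filter]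
  push_cast
  exact Fintype.sum_prod_type
    (f := fun p : V × V => if G.Adj p.1 p.2 ∧ p.1 ∈ S ∧ p.2 ∉ S then (1:ℝ) else 0)

lemma swap_cut_eq (G : SimpleGraph V) [DecidableRel G.Adj] (S : Finset V) :
    ∑ i : V, ∑ j : V, (if G.Adj i j ∧ i ∉ S ∧ j ∈ S then (1:ℝ) else 0)
    = ∑ i : V, ∑ j : V, (if G.Adj i j ∧ i ∈ S ∧ j ∉ S then (1:ℝ) else 0) := by
  rw [Finset.sum_comm]
  refine Finset.sum_congr rfl fun i _ => Finset.sum_congr rfl fun j _ => ?_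
  have h : (G.Adj j i ∧ j ∉ S ∧ i ∈ S) ↔ (G.Adj i j ∧ i ∈ S ∧ j ∉ S) := by
    rw [G.adj_comm]; tauto
  exact if_congr h rfl rfl

lemma xAx (G : SimpleGraph V) [DecidableRel G.Adj] (S : Finset V) :
    pvec S ⬝ᵥ (G.adjMatrix ℝ *ᵥ pvec S)
      = 2 * G.edgeFinset.card - 4 * cutNum G S := by
  rw [SimpleGraph.dotProduct_mulVec_adjMatrix]
  have key : ∀ i j : V, (if G.Adj i j then pvec S i * pvec S j else 0)
      = (if G.Adj i j then (1:ℝ) else 0)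
        - 2 * (if G.Adj i j ∧ i ∈ S ∧ j ∉ S then (1:ℝ) else 0)
        - 2 * (if G.Adj i j ∧ i ∉ S ∧ j ∈ S then (1:ℝ) else 0) := by
    intro i j
    by_cases ha : G.Adj i j <;> by_cases hi : i ∈ S <;> by_cases hj : j ∈ S <;>
      simp [pvec, ha, hi, hj] <;> norm_num
  simp_rw [key, Finset.sum_sub_distrib, ← Finset.mul_sum]
  rw [sum_adj_ind, swap_cut_eq, ← cutNum_real]
  ring

lemma xDx (G : SimpleGraph V) [DecidableRel G.Adj] (S : Finset V) :
    pvec S ⬝ᵥ (G.degMatrix ℝ *ᵥ pvec S) = 2 * G.edgeFinset.card := by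
  rw [SimpleGraph.dotProduct_mulVec_degMatrix]
  have h1 : ∀ i : V, (G.degree i : ℝ) * pvec S i * pvec S i = G.degree i := by
    intro i; by_cases hi : i ∈ S <;> simp [pvec, hi]
  simp_rw [h1]
  rw [← Nat.cast_sum, SimpleGraph.sum_degrees_eq_twice_card_edges]
  push_cast; ring

lemma xx (S : Finset V) : pvec S ⬝ᵥ pvec S = (Fintype.card V : ℝ) := by
  have h1 : ∀ i : V, pvec S i * pvec S i = 1 := by
    intro i; by_cases hi : i ∈ S <;> simp [pvec, hi]
  rw [dotProduct]
  simp_rw [h1]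
  simp

end Aux

/-- If `G` is both `L`-exact and `Q`-exact, then `G` is regular and also `A`-exact. -/
theorem stmt15 (G : SimpleGraph V) [DecidableRel G.Adj]
    (hL : (⨆ i, (isHermitian_lap G).eigenvalues i) = 4 / (Fintype.card V : ℝ) * mcut G)
    (hQ : (⨅ i, (isHermitian_signlessLap G).eigenvalues i) = 4 / (Fintype.card V : ℝ) * ((G.edgeFinset.card : ℝ) - mcut G)) :
    (∃ r : ℕ, G.IsRegularOfDegree r) ∧
      (⨅ i, (isHermitian_adj G).eigenvalues i) = 2 / (Fintype.card V : ℝ) * ((G.edgeFinset.card : ℝ) - 2 * mcut G) := by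
  rcases isEmpty_or_nonempty V with hV | hV
  · refine ⟨⟨0, fun v => isEmptyElim v⟩, ?_⟩
    rw [Real.iInf_of_isEmpty]
    simp [Fintype.card_eq_zero]
  · have hn0 : (0:ℝ) < (Fintype.card V : ℝ) := by
      exact_mod_cast Fintype.card_pos
    have hne : (Fintype.card V : ℝ) ≠ 0 := ne_of_gt hn0
    obtain ⟨S, -, hS⟩ := Finset.exists_mem_eq_sup (Finset.univ : Finset (Finset V))
      ⟨∅, Finset.mem_univ _⟩ (fun T => cutNum G T)
    have hmc : (mcut G : ℝ) = (cutNum G S : ℝ) := by rw [mcut, hS]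
    set n : ℝ := (Fintype.card V : ℝ) with hndef
    set m : ℝ := (G.edgeFinset.card : ℝ) with hmdef
    set a : ℝ := (cutNum G S : ℝ) with hadef
    set x : V → ℝ := pvec S with hxdef
    have hstar : star x = x := by funext v; simp
    have hxx : x ⬝ᵥ x = n := xx S
    have hxA : x ⬝ᵥ (G.adjMatrix ℝ *ᵥ x) = 2 * m - 4 * a := xAx G S
    have hxD : x ⬝ᵥ (G.degMatrix ℝ *ᵥ x) = 2 * m := xDx G S
    set μ : ℝ := ⨆ i, (isHermitian_lap G).eigenvalues i with hμdef
    set q : ℝ := ⨅ i, (isHermitian_signlessLap G).eigenvalues i with hqdef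
    have hμa : μ * n = 4 * a := by
      rw [hL, hmc]; field_simp
    have hqa : q * n = 4 * (m - a) := by
      rw [hQ, hmc]; field_simp
    have psdL : ((μ • 1 : Matrix V V ℝ) - G.lapMatrix ℝ).PosSemidef :=
      psd_smul_sub (isHermitian_lap G)
        (fun i => le_ciSup (Set.Finite.bddAbove (Set.finite_range _)) i)
    have psdQ : (signlessLap G - (q • 1 : Matrix V V ℝ)).PosSemidef :=
      psd_sub_smul (isHermitian_signlessLap G)
        (fun i => ciInf_le (Set.Finite.bddBelow (Set.finite_range _)) i)
    have hxL : x ⬝ᵥ (G.lapMatrix ℝ *ᵥ x) = 4 * a := by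
      rw [SimpleGraph.lapMatrix, Matrix.sub_mulVec, dotProduct_sub, hxD, hxA]; ring
    have hxQ : x ⬝ᵥ (signlessLap G *ᵥ x) = 4 * (m - a) := by
      rw [signlessLap, Matrix.add_mulVec, dotProduct_add, hxD, hxA]; ring
    have hLx : G.lapMatrix ℝ *ᵥ x = μ • x := by
      have h0 : star x ⬝ᵥ (((μ • 1 : Matrix V V ℝ) - G.lapMatrix ℝ) *ᵥ x) = 0 := by
        rw [hstar, Matrix.sub_mulVec, dotProduct_sub, Matrix.smul_mulVec,
          Matrix.one_mulVec, dotProduct_smul, hxx, hxL, smul_eq_mul, hμa, sub_self]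
      have h1 := (psdL.dotProduct_mulVec_zero_iff x).mp h0
      rw [Matrix.sub_mulVec, Matrix.smul_mulVec, Matrix.one_mulVec,
        sub_eq_zero] at h1
      exact h1.symm
    have hQx : signlessLap G *ᵥ x = q • x := by
      have h0 : star x ⬝ᵥ ((signlessLap G - (q • 1 : Matrix V V ℝ)) *ᵥ x) = 0 := by
        rw [hstar, Matrix.sub_mulVec, dotProduct_sub, Matrix.smul_mulVec,
          Matrix.one_mulVec, dotProduct_smul, hxx, hxQ, smul_eq_mul, hqa, sub_self]
      have h1 := (psdQ.dotProduct_mulVec_zero_iff x).mp h0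
      rw [Matrix.sub_mulVec, Matrix.smul_mulVec, Matrix.one_mulVec,
        sub_eq_zero] at h1
      exact h1
    have hx1 : ∀ v : V, x v = 1 ∨ x v = -1 := by
      intro v; by_cases hv : v ∈ S <;> simp [hxdef, pvec, hv]
    have hdeg' : ∀ v : V, (G.degree v : ℝ) = (μ + q) / 2 := by
      intro v
      have h1 := congrFun hLx v
      have h2 := congrFun hQx v
      rw [SimpleGraph.lapMatrix_mulVec_apply, Pi.smul_apply, smul_eq_mul] at h1
      have h2' : (signlessLap G *ᵥ x) v
          = G.degree v * x v + ∑ u ∈ G.neighborFinset v, x u := by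
        rw [signlessLap, Matrix.add_mulVec, Pi.add_apply,
          SimpleGraph.degMatrix_mulVec_apply, SimpleGraph.adjMatrix_mulVec_apply]
      rw [h2', Pi.smul_apply, smul_eq_mul] at h2
      rcases hx1 v with hv | hv <;> rw [hv] at h1 h2 <;> linarith
    have v₀ : V := Classical.arbitrary V
    have hreg : G.IsRegularOfDegree (G.degree v₀) := by
      intro v
      have : (G.degree v : ℝ) = (G.degree v₀ : ℝ) := by rw [hdeg' v, hdeg' v₀]
      exact_mod_cast this
    refine ⟨⟨G.degree v₀, hreg⟩, ?_⟩
    set r : ℝ := (G.degree v₀ : ℝ) with hrdef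
    have hrm : r * n = 2 * m := by
      have h1 : ∑ v : V, G.degree v = Fintype.card V * G.degree v₀ := by
        rw [Finset.sum_congr rfl (fun v _ => hreg v), Finset.sum_const, smul_eq_mul,
          Finset.card_univ]
      have h2 := SimpleGraph.sum_degrees_eq_twice_card_edges G
      rw [h1] at h2
      have h3 : ((Fintype.card V : ℕ) : ℝ) * ((G.degree v₀ : ℕ) : ℝ)
          = 2 * ((G.edgeFinset.card : ℕ) : ℝ) := by exact_mod_cast h2
      rw [hrdef, hndef, hmdef]; linarith
    set lam : ℝ := 2 / n * (m - 2 * (mcut G : ℝ)) with hlamdef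
    have hlamn : lam * n = 2 * m - 4 * a := by
      rw [hlamdef, hmc]; field_simp; ring
    have hlam : lam = r - μ := by
      have : lam * n = (r - μ) * n := by rw [hlamn, sub_mul, hμa, hrm]
      exact mul_right_cancel₀ hne this
    have hD : G.degMatrix ℝ = (r • 1 : Matrix V V ℝ) := by
      ext i j
      by_cases h : i = j
      · subst h; simp [SimpleGraph.degMatrix, Matrix.one_apply, hreg i, hrdef]
      · simp [SimpleGraph.degMatrix, Matrix.diagonal, h, Matrix.one_apply]
    have hAlam : G.adjMatrix ℝ - (lam • 1 : Matrix V V ℝ)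
        = (μ • 1 : Matrix V V ℝ) - G.lapMatrix ℝ := by
      rw [hlam, SimpleGraph.lapMatrix, hD, sub_smul]
      abel
    have psdA : (G.adjMatrix ℝ - (lam • 1 : Matrix V V ℝ)).PosSemidef := by
      rw [hAlam]; exact psdL
    have hAx : G.adjMatrix ℝ *ᵥ x = lam • x := by
      have hA' : G.adjMatrix ℝ *ᵥ x = G.degMatrix ℝ *ᵥ x - G.lapMatrix ℝ *ᵥ x := by
        rw [SimpleGraph.lapMatrix, Matrix.sub_mulVec]; abel
      rw [hA', hLx, hD, Matrix.smul_mulVec, Matrix.one_mulVec, hlam, sub_smul]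
    set c : ℝ := ⨅ i, (isHermitian_adj G).eigenvalues i with hcdef
    have psdAc : (G.adjMatrix ℝ - (c • 1 : Matrix V V ℝ)).PosSemidef :=
      psd_sub_smul (isHermitian_adj G)
        (fun i => ciInf_le (Set.Finite.bddBelow (Set.finite_range _)) i)
    have h1 : c ≤ lam := by
      have h0 := psdAc.dotProduct_mulVec_nonneg x
      rw [hstar, Matrix.sub_mulVec, Matrix.smul_mulVec, Matrix.one_mulVec,
        hAx, dotProduct_sub, dotProduct_smul, dotProduct_smul, hxx,
        smul_eq_mul, smul_eq_mul] at h0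
      nlinarith
    have h2 : lam ≤ c := by
      refine le_ciInf fun i => ?_
      set v : V → ℝ := ⇑((isHermitian_adj G).eigenvectorBasis i) with hvdef
      have hv : G.adjMatrix ℝ *ᵥ v = (isHermitian_adj G).eigenvalues i • v :=
        (isHermitian_adj G).mulVec_eigenvectorBasis i
      have hstarv : star v = v := by funext u; simp
      have hvne : v ≠ 0 := by
        intro h
        have hb : ‖(isHermitian_adj G).eigenvectorBasis i‖ = 1 :=
          (isHermitian_adj G).eigenvectorBasis.orthonormal.1 i
        have hz : (isHermitian_adj G).eigenvectorBasis i = 0 := by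
          ext k; exact congrFun h k
        rw [hz] at hb; simp at hb
      have hvv : 0 < v ⬝ᵥ v := by
        obtain ⟨k, hk⟩ := Function.ne_iff.mp hvne
        refine Finset.sum_pos' (fun u _ => mul_self_nonneg _) ⟨k, Finset.mem_univ _, ?_⟩
        exact mul_self_pos.mpr (by simpa using hk)
      have h0 := psdA.dotProduct_mulVec_nonneg v
      rw [hstarv, Matrix.sub_mulVec, Matrix.smul_mulVec, Matrix.one_mulVec,
        hv, dotProduct_sub, dotProduct_smul, dotProduct_smul,
        smul_eq_mul, smul_eq_mul] at h0
      nlinarith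
    have : c = lam := le_antisymm h1 h2
    rw [this]
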